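/- Let n ≥ 1 and let X₁, …, X_k be signed subsets of [n+1], each with X_i⁺ and X_i⁻ both nonempty, such that there do not exist indices a, b, c, d ∈ {1, …, k} with {a, b} ∩ {c, d} = ∅ and (X_a⁺ ∪ X_c⁺) ∩ (X_b⁻ ∪ X_d⁻) = ∅. Then k ≤ C(n+2, ⌊(n+2)/2⌋). Moreover, if k = C(n+2, ⌊(n+2)/2⌋), then X_i⁺ ∪ X_i⁻ = [n+1] for every i, and either every |X_i⁺| lies in {⌊(n+1)/2⌋, ⌊(n+1)/2⌋ + 1}, or every |X_i⁺| lies in {⌈(n+1)/2⌉ − 1, ⌈(n+1)/2⌉}. -/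

import Mathlib

open Finset Nat

namespace SignedExtremal

set_option linter.unusedSectionVars false
set_option linter.unusedVariables false


/-! ### Binomial helpers -/

lemma choose_lt_succ' {m r : ℕ} (h2 : 2 * (r + 1) ≤ m) :
    m.choose r < m.choose (r + 1) := by
  have hrm : r ≤ m := by omega
  have hpos : 0 < m.choose r := Nat.choose_pos hrm
  have hid := Nat.choose_succ_right_eq m r
  have h1 : m.choose r * (r + 1) < m.choose r * (m - r) :=
    mul_lt_mul_of_pos_left (by omega) hpos
  have h3 : m.choose r * (r + 1) < m.choose (r + 1) * (r + 1) := by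
    rw [hid]; exact h1
  exact Nat.lt_of_mul_lt_mul_right h3

lemma choose_lt_of_lt {m a b : ℕ} (hab : a < b) (hb : 2 * b ≤ m) :
    m.choose a < m.choose b := by
  induction b with
  | zero => omega
  | succ b ih =>
    rcases Nat.lt_or_ge a b with hab' | hab'
    · exact (ih hab' (by omega)).trans (choose_lt_succ' hb)
    · have : a = b := by omega
      subst this
      exact choose_lt_succ' hb

lemma choose_le_of_le {m a b : ℕ} (hab : a ≤ b) (hb : 2 * b ≤ m) :
    m.choose a ≤ m.choose b := by
  rcases Nat.lt_or_ge a b with hab' | hab'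
  · exact (choose_lt_of_lt hab' hb).le
  · have : a = b := by omega
    subst this; rfl

lemma midchoose_step (m : ℕ) : m.choose (m / 2) ≤ (m + 1).choose ((m + 1) / 2) := by
  rcases Nat.even_or_odd m with he | ho
  · rcases Nat.eq_zero_or_pos m with hm0 | hm0
    · subst hm0; simp
    · rcases he with ⟨r, hr⟩
      have h1 : (m + 1) / 2 = m / 2 := by omega
      obtain ⟨j, hj⟩ : ∃ j, m / 2 = j + 1 := ⟨m / 2 - 1, by omega⟩
      calc m.choose (m / 2) = m.choose (j + 1) := by rw [hj]
        _ ≤ m.choose j + m.choose (j + 1) := Nat.le_add_left _ _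
        _ = (m + 1).choose (j + 1) := (Nat.choose_succ_succ m j).symm
        _ = (m + 1).choose ((m + 1) / 2) := by rw [h1, hj]
  · have h1 : (m + 1) / 2 = m / 2 + 1 := by
      rcases ho with ⟨r, hr⟩; omega
    calc m.choose (m / 2) ≤ m.choose (m / 2) + m.choose (m / 2 + 1) := Nat.le_add_right _ _
      _ = (m + 1).choose (m / 2 + 1) := (Nat.choose_succ_succ m (m / 2)).symm
      _ = (m + 1).choose ((m + 1) / 2) := by rw [h1]

lemma midchoose_mono : ∀ {s m : ℕ}, s ≤ m → s.choose (s / 2) ≤ m.choose (m / 2) := by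
  intro s m h
  induction m with
  | zero => have : s = 0 := by omega
            subst this; rfl
  | succ m ih =>
    rcases Nat.lt_or_ge s (m + 1) with h' | h'
    · exact (ih (by omega)).trans (midchoose_step m)
    · have : s = m + 1 := by omega
      subst this; rfl

lemma midchoose_strict {m : ℕ} (hm : 1 ≤ m) :
    m.choose (m / 2) < (m + 1).choose ((m + 1) / 2) := by
  rcases Nat.even_or_odd m with he | ho
  · rcases he with ⟨r, hr⟩
    have hr1 : 1 ≤ r := by omega
    have h1 : (m + 1) / 2 = m / 2 := by omega
    obtain ⟨j, hj⟩ : ∃ j, m / 2 = j + 1 := ⟨m / 2 - 1, by omega⟩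
    have hpos : 0 < m.choose j := Nat.choose_pos (by omega)
    calc m.choose (m / 2) = m.choose (j + 1) := by rw [hj]
      _ < m.choose j + m.choose (j + 1) := by omega
      _ = (m + 1).choose (j + 1) := (Nat.choose_succ_succ m j).symm
      _ = (m + 1).choose ((m + 1) / 2) := by rw [h1, hj]
  · have h1 : (m + 1) / 2 = m / 2 + 1 := by
      rcases ho with ⟨r, hr⟩; omega
    have hpos : 0 < m.choose (m / 2 + 1) := Nat.choose_pos (by
      rcases ho with ⟨r, hr⟩; omega)
    calc m.choose (m / 2) < m.choose (m / 2) + m.choose (m / 2 + 1) := by omega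
      _ = (m + 1).choose (m / 2 + 1) := (Nat.choose_succ_succ m (m / 2)).symm
      _ = (m + 1).choose ((m + 1) / 2) := by rw [h1]



variable {α : Type*} [Fintype α] [DecidableEq α]

/-- Classifier of a pair of disjoint finsets. -/
def cls (A C : Finset α) (x : α) : Fin 3 :=
  if x ∈ A then 0 else if x ∈ C then 1 else 2

set_option linter.unusedSectionVars false

lemma cls_eq_zero {A C : Finset α} {x : α} : cls A C x = 0 ↔ x ∈ A := by
  unfold cls
  split_ifs with h1 h2 <;> simp_all

lemma cls_eq_one_imp {A C : Finset α} {x : α} (h : cls A C x = 1) : x ∈ C := by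
  unfold cls at h
  split_ifs at h <;> simp_all

lemma cls_eq_one {A C : Finset α} {x : α} (hAC : Disjoint A C) :
    cls A C x = 1 ↔ x ∈ C := by
  constructor
  · exact cls_eq_one_imp
  · intro hx
    unfold cls
    rw [if_neg (fun hA => (Finset.disjoint_left.mp hAC) hA hx), if_pos hx]

lemma card_fiber_cls (A C : Finset α) (hAC : Disjoint A C) (c : Fin 3) :
    Fintype.card {x // cls A C x = c} =
      if c = 0 then A.card else if c = 1 then C.card
      else Fintype.card α - A.card - C.card := by
  rw [Fintype.card_subtype]
  fin_cases c <;> simp only [Fin.isValue, Fin.mk_one, show ((⟨0, by omega⟩ : Fin 3) = 0) from rfl,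
    show ((⟨1, by omega⟩ : Fin 3) = 1) from rfl, show ((⟨2, by omega⟩ : Fin 3) = 2) from rfl,
    if_pos rfl, if_neg (show (1:Fin 3) ≠ 0 by decide), if_neg (show (2:Fin 3) ≠ 0 by decide),
    if_neg (show (2:Fin 3) ≠ 1 by decide)]
  · congr 1
    ext x
    simp [cls_eq_zero]
  · congr 1
    ext x
    simp [cls_eq_one hAC]
  · have heq : univ.filter (fun x => cls A C x = (2 : Fin 3)) = (A ∪ C)ᶜ := by
      ext x
      rw [Finset.mem_filter]
      by_cases h1 : x ∈ A <;> by_cases h2 : x ∈ C <;>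
        simp [cls, h1, h2]
    rw [heq, Finset.card_compl, Finset.card_union_of_disjoint hAC]
    omega

/-- There is a permutation carrying one disjoint pair of finsets to another
pair of the same sizes. -/
lemma exists_perm_between (A C V W : Finset α) (hAC : Disjoint A C) (hVW : Disjoint V W)
    (h1 : A.card = V.card) (h2 : C.card = W.card) :
    ∃ σ : Equiv.Perm α, (∀ x ∈ A, σ x ∈ V) ∧ (∀ y ∈ C, σ y ∈ W) := by
  have hfib : ∀ c : Fin 3,
      Fintype.card {x // cls A C x = c} = Fintype.card {x // cls V W x = c} := by
    intro c
    rw [card_fiber_cls A C hAC, card_fiber_cls V W hVW, h1, h2]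
  refine ⟨Equiv.ofFiberEquiv (f := cls A C) (g := cls V W)
    (fun c => Fintype.equivOfCardEq (hfib c)), ?_, ?_⟩
  · intro x hx
    have := Equiv.ofFiberEquiv_map (fun c => Fintype.equivOfCardEq (hfib c)) x
    rw [cls_eq_zero.mpr hx] at this
    exact cls_eq_zero.mp this
  · intro y hy
    have := Equiv.ofFiberEquiv_map (fun c => Fintype.equivOfCardEq (hfib c)) y
    rw [(cls_eq_one hAC).mpr hy] at this
    exact cls_eq_one_imp this

/-- Bottom `a` elements of `U` with respect to a permutation. -/
lemma exists_bottom [LinearOrder α] (U : Finset α) (π : Equiv.Perm α) :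
    ∀ a, a ≤ U.card → ∃ V, V ⊆ U ∧ V.card = a ∧
      ∀ x ∈ V, ∀ y ∈ U \ V, π x < π y := by
  intro a
  induction a with
  | zero => exact fun _ => ⟨∅, by simp⟩
  | succ a ih =>
    intro ha
    obtain ⟨V, hVU, hVcard, hVlt⟩ := ih (by omega)
    have hne : (U \ V).Nonempty := by
      rw [Finset.sdiff_nonempty]
      intro hsub
      have := Finset.card_le_card hsub
      omega
    obtain ⟨m, hm, hmin⟩ := (U \ V).exists_min_image π hne
    have hmU : m ∈ U := (Finset.mem_sdiff.mp hm).1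
    have hmV : m ∉ V := (Finset.mem_sdiff.mp hm).2
    refine ⟨insert m V, ?_, ?_, ?_⟩
    · exact Finset.insert_subset hmU hVU
    · rw [Finset.card_insert_of_notMem hmV, hVcard]
    · intro x hx y hy
      rw [Finset.mem_sdiff] at hy
      have hyU : y ∈ U := hy.1
      have hym : y ≠ m := fun hEq => hy.2 (hEq ▸ Finset.mem_insert_self m V)
      have hyV : y ∉ V := fun hEq => hy.2 (Finset.mem_insert_of_mem hEq)
      rcases Finset.mem_insert.mp hx with rfl | hxV
      · have hle : π x ≤ π y := hmin y (Finset.mem_sdiff.mpr ⟨hyU, hyV⟩)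
        have hne2 : π x ≠ π y := fun hEq => hym (π.injective hEq).symm
        exact lt_of_le_of_ne hle hne2
      · exact hVlt x hxV y (Finset.mem_sdiff.mpr ⟨hyU, hyV⟩)


variable {α : Type*} [Fintype α] [LinearOrder α] [DecidableEq α]


/-- Main counting inequality: at least `N!/C(a+c,a)` permutations put all of `A`
before all of `C`. -/
theorem factorial_le_card_mul (A C : Finset α) (hAC : Disjoint A C) :
    (Fintype.card α)! ≤
      (univ.filter fun π : Equiv.Perm α => ∀ x ∈ A, ∀ y ∈ C, π x < π y).card *
        ((A.card + C.card).choose A.card) := by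
  classical
  set U : Finset α := A ∪ C with hU
  have hUcard : U.card = A.card + C.card := Finset.card_union_of_disjoint hAC
  -- bottom set of each permutation
  have hbot : ∀ π : Equiv.Perm α, ∃ V, V ⊆ U ∧ V.card = A.card ∧
      ∀ x ∈ V, ∀ y ∈ U \ V, π x < π y :=
    fun π => exists_bottom U π A.card (by omega)
  choose V hVU hVcard hVlt using hbot
  -- a permutation for each candidate bottom set
  have hsig : ∀ W : Finset α, ∃ σ : Equiv.Perm α, W ⊆ U → W.card = A.card →
      ((∀ x ∈ A, σ x ∈ W) ∧ (∀ y ∈ C, σ y ∈ U \ W)) := by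
    intro W
    by_cases hW : W ⊆ U ∧ W.card = A.card
    · obtain ⟨σ, hσ1, hσ2⟩ := exists_perm_between A C W (U \ W) hAC
        Finset.disjoint_sdiff hW.2.symm
        (by rw [Finset.card_sdiff_of_subset hW.1, hUcard, hW.2]; omega)
      exact ⟨σ, fun _ _ => ⟨hσ1, hσ2⟩⟩
    · exact ⟨1, fun h1 h2 => absurd ⟨h1, h2⟩ hW⟩
  choose σf hσf using hsig
  -- the injection
  set Φ : Equiv.Perm α → Equiv.Perm α × Finset α :=
    fun π => ((σf (V π)).trans π, V π) with hΦ
  have hmaps : ∀ π ∈ (univ : Finset (Equiv.Perm α)),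
      Φ π ∈ (univ.filter fun π : Equiv.Perm α => ∀ x ∈ A, ∀ y ∈ C, π x < π y) ×ˢ
        (U.powersetCard A.card) := by
    intro π _
    rw [Finset.mem_product, Finset.mem_filter, Finset.mem_powersetCard]
    obtain ⟨hσ1, hσ2⟩ := hσf (V π) (hVU π) (hVcard π)
    refine ⟨⟨Finset.mem_univ _, ?_⟩, hVU π, hVcard π⟩
    intro x hx y hy
    exact hVlt π (σf (V π) x) (hσ1 x hx) (σf (V π) y) (hσ2 y hy)
  have hinj : Set.InjOn Φ (univ : Finset (Equiv.Perm α)) := by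
    intro π1 _ π2 _ hEq
    rw [hΦ, Prod.mk.injEq] at hEq
    obtain ⟨hEq1, hEq2⟩ := hEq
    rw [hEq2] at hEq1
    have := congrArg (fun τ => (σf (V π2)).symm.trans τ) hEq1
    simpa [← Equiv.trans_assoc] using this
  have hcard := Finset.card_le_card_of_injOn Φ hmaps hinj
  rw [Finset.card_product, Finset.card_powersetCard, hUcard] at hcard
  calc (Fintype.card α)! = Fintype.card (Equiv.Perm α) := (Fintype.card_perm).symm
    _ = (univ : Finset (Equiv.Perm α)).card := (Finset.card_univ).symm
    _ ≤ _ := hcard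


variable {α : Type*} [Fintype α] [DecidableEq α]

/-- The number of `m`-element supersets of a fixed `T`. -/
lemma card_supersets (T : Finset α) (m : ℕ) (hTm : T.card ≤ m) :
    (((univ : Finset α).powersetCard m).filter (fun S => T ⊆ S)).card =
      (Fintype.card α - T.card).choose (m - T.card) := by
  classical
  rw [← Finset.card_compl T, ← Finset.card_powersetCard]
  apply Finset.card_nbij' (i := fun S => S \ T) (j := fun R => T ∪ R)
  · intro S hS
    rw [Finset.mem_coe, Finset.mem_filter, Finset.mem_powersetCard] at hS
    rw [Finset.mem_coe, Finset.mem_powersetCard]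
    refine ⟨?_, ?_⟩
    · intro x hx
      rw [Finset.mem_sdiff] at hx
      simpa using hx.2
    · rw [Finset.card_sdiff_of_subset hS.2, hS.1.2]
  · intro R hR
    rw [Finset.mem_coe, Finset.mem_powersetCard] at hR
    have hdisj : Disjoint T R := by
      rw [Finset.disjoint_right]
      intro x hx
      have := hR.1 hx
      simpa using this
    rw [Finset.mem_coe, Finset.mem_filter, Finset.mem_powersetCard]
    refine ⟨⟨Finset.subset_univ _, ?_⟩, Finset.subset_union_left⟩
    rw [Finset.card_union_of_disjoint hdisj, hR.2]
    omega
  · intro S hS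
    rw [Finset.mem_coe, Finset.mem_filter] at hS
    exact Finset.union_sdiff_of_subset hS.2
  · intro R hR
    rw [Finset.mem_coe, Finset.mem_powersetCard] at hR
    have hdisj : Disjoint T R := by
      rw [Finset.disjoint_right]
      intro x hx
      have := hR.1 hx
      simpa using this
    exact Finset.union_sdiff_cancel_left hdisj

/-- Johnson-scheme connectivity: a nonempty, non-full family in a level has a
member and a non-member whose union is small. -/
lemma exists_adjacent_pair {ℓ : ℕ} (𝒜 𝒟 : Finset (Finset α))
    (hA : ∀ T ∈ 𝒜, T.card = ℓ) (hD : ∀ T ∈ 𝒟, T.card = ℓ)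
    (hAD : Disjoint 𝒜 𝒟)
    (hcover : ∀ T : Finset α, T.card = ℓ → T ∈ 𝒜 ∨ T ∈ 𝒟)
    (hAne : 𝒜.Nonempty) (hDne : 𝒟.Nonempty) :
    ∃ T0 ∈ 𝒜, ∃ T1 ∈ 𝒟, (T0 ∪ T1).card ≤ ℓ + 1 := by
  classical
  have hne : (𝒜 ×ˢ 𝒟).Nonempty := hAne.product hDne
  obtain ⟨p, hp, hmin⟩ := (𝒜 ×ˢ 𝒟).exists_min_image (fun p => (p.1 ∪ p.2).card) hne
  obtain ⟨T, T'⟩ := p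
  rw [Finset.mem_product] at hp
  obtain ⟨hT, hT'⟩ := hp
  by_contra hcon
  push_neg at hcon
  have hbig : ℓ + 1 < (T ∪ T').card := by
    have := hcon T hT T' hT'
    omega
  -- T ≠ T', pick x ∈ T \ T', y ∈ T' \ T
  have hTx : (T \ T').Nonempty := by
    rw [Finset.sdiff_nonempty]
    intro hsub
    have hEq : T = T' := Finset.eq_of_subset_of_card_le hsub (by rw [hA T hT, hD T' hT'])
    rw [hEq, Finset.union_self, hD T' hT'] at hbig
    omega
  have hTy : (T' \ T).Nonempty := by
    rw [Finset.sdiff_nonempty]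
    intro hsub
    have hEq : T' = T := Finset.eq_of_subset_of_card_le hsub (by rw [hD T' hT', hA T hT])
    rw [hEq, Finset.union_self, hA T hT] at hbig
    omega
  obtain ⟨x, hx⟩ := hTx
  obtain ⟨y, hy⟩ := hTy
  rw [Finset.mem_sdiff] at hx hy
  set T'' : Finset α := insert y (T.erase x) with hT''def
  have hyx : y ≠ x := fun hEq => hx.2 (hEq ▸ hy.1)
  have hynotTe : y ∉ T.erase x := fun hc => hy.2 (Finset.mem_of_mem_erase hc)
  have hT''card : T''.card = ℓ := by
    rw [hT''def, Finset.card_insert_of_notMem hynotTe,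
      Finset.card_erase_of_mem hx.1, hA T hT]
    have : 1 ≤ ℓ := by
      rw [← hA T hT]
      exact Finset.card_pos.mpr ⟨x, hx.1⟩
    omega
  rcases hcover T'' hT''card with hc | hc
  · -- T'' ∈ 𝒜 : pair (T'', T') is closer, contradiction
    have hsub : T'' ∪ T' ⊆ (T ∪ T').erase x := by
      intro z hz
      rw [Finset.mem_erase, Finset.mem_union]
      rcases Finset.mem_union.mp hz with hz1 | hz2
      · rw [hT''def, Finset.mem_insert] at hz1
        rcases hz1 with rfl | hz1
        · exact ⟨hyx, Or.inr hy.1⟩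
        · rw [Finset.mem_erase] at hz1
          exact ⟨hz1.1, Or.inl hz1.2⟩
      · refine ⟨fun hEq => hx.2 (hEq ▸ hz2), Or.inr hz2⟩
    have hlt : (T'' ∪ T').card < (T ∪ T').card := by
      calc (T'' ∪ T').card ≤ ((T ∪ T').erase x).card := Finset.card_le_card hsub
        _ < (T ∪ T').card := Finset.card_erase_lt_of_mem (Finset.mem_union_left _ hx.1)
    have := hmin (T'', T') (Finset.mem_product.mpr ⟨hc, hT'⟩)
    simp only at this
    omega
  · -- T'' ∈ 𝒟 : pair (T, T'') has small union
    have hunion : (T ∪ T'').card ≤ ℓ + 1 := by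
      have : T ∪ T'' = insert y T := by
        rw [hT''def]
        ext z
        simp only [Finset.mem_union, Finset.mem_insert, Finset.mem_erase]
        constructor
        · rintro (hz | rfl | hz) <;> tauto
        · rintro (rfl | hz)
          · tauto
          · by_cases hzx : z = x <;> tauto
      rw [this, Finset.card_insert_of_notMem hy.2, hA T hT]
    have := hcon T hT T'' hc
    omega




lemma pascal_mid {N : ℕ} (hN : 1 ≤ N) :
    (N + 1).choose ((N + 1) / 2) = N.choose (N / 2) + N.choose (N / 2 + 1) := by
  rcases Nat.even_or_odd N with ⟨m, hm⟩ | ⟨m, hm⟩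
  · have h1 : (N + 1) / 2 = N / 2 := by omega
    have h2 : (N + 1).choose (N / 2) = (N + 1).choose (N / 2 + 1) := by
      have h3 := Nat.choose_symm (show N / 2 ≤ N + 1 by omega)
      rw [show N + 1 - N / 2 = N / 2 + 1 by omega] at h3
      exact h3.symm
    rw [h1, h2, Nat.choose_succ_succ]
  · rw [show (N + 1) / 2 = N / 2 + 1 by omega, Nat.choose_succ_succ]

lemma mid_pred_le {N : ℕ} (hN : 2 ≤ N) :
    (N - 1).choose ((N - 1) / 2) ≤ N.choose (N / 2 + 1) := by
  rcases Nat.even_or_odd N with ⟨m, hm⟩ | ⟨m, hm⟩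
  · -- N = 2m, m ≥ 1
    have hm1 : 1 ≤ m := by omega
    have hps : N.choose (N / 2 + 1) = (N - 1).choose (N / 2) + (N - 1).choose (N / 2 + 1) := by
      rw [show N = (N - 1) + 1 by omega, show (N-1+1) / 2 + 1 = (N-1)/2 + 1 + 1 by omega,
        Nat.choose_succ_succ]
      congr 2 <;> omega
    have hsy : (N - 1).choose (N / 2) = (N - 1).choose ((N - 1) / 2) := by
      have h3 := Nat.choose_symm (show N / 2 ≤ N - 1 by omega)
      rw [show N - 1 - N / 2 = (N - 1) / 2 by omega] at h3
      exact h3.symm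
    rw [hps, hsy]
    omega
  · -- N = 2m + 1
    have hps : N.choose (N / 2 + 1) = (N - 1).choose (N / 2) + (N - 1).choose (N / 2 + 1) := by
      rw [show N = (N - 1) + 1 by omega, show (N-1+1) / 2 + 1 = (N-1)/2 + 1 by omega,
        Nat.choose_succ_succ]
      congr 2 <;> omega
    have : (N - 1).choose ((N - 1) / 2) = (N - 1).choose (N / 2) := by congr 1; omega
    omega

lemma offmid_le {N a : ℕ} (hN : 2 ≤ N) (haN : a ≤ N) (hne : a ≠ N / 2) :
    N.choose a ≤ N.choose (N / 2 + 1) := by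
  rcases Nat.even_or_odd N with ⟨m, hm⟩ | ⟨m, hm⟩
  · -- N = 2m
    have hm1 : 1 ≤ m := by omega
    have hNm : N / 2 = m := by omega
    have hsymm : N.choose (m - 1) = N.choose (m + 1) := by
      have h3 := Nat.choose_symm (show m + 1 ≤ N by omega)
      rw [show N - (m + 1) = m - 1 by omega] at h3
      exact h3
    rcases Nat.lt_or_ge a m with hlt | hge
    · rw [hNm, ← hsymm]
      exact choose_le_of_le (by omega) (by omega)
    · have hgt : m < a := by omega
      have h4 := Nat.choose_symm haN
      rw [← h4, hNm, ← hsymm]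
      exact choose_le_of_le (by omega) (by omega)
  · -- N odd: middle+1 equals middle
    have hNm : N / 2 = m := by omega
    have hsymm : N.choose (N / 2 + 1) = N.choose (N / 2) := by
      have h3 := Nat.choose_symm (show N / 2 + 1 ≤ N by omega)
      rw [show N - (N / 2 + 1) = N / 2 by omega] at h3
      exact h3.symm
    rw [hsymm]
    exact Nat.choose_le_middle a N

lemma nonmid_choose_le {N s a : ℕ} (hN : 2 ≤ N) (hs : s ≤ N) (ha : a ≤ s)
    (hnot : ¬(s = N ∧ a = N / 2)) : s.choose a ≤ N.choose (N / 2 + 1) := by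
  rcases Nat.eq_or_lt_of_le hs with rfl | hlt
  · exact offmid_le hN ha (fun hEq => hnot ⟨rfl, hEq⟩)
  · calc s.choose a ≤ s.choose (s / 2) := Nat.choose_le_middle a s
      _ ≤ (N - 1).choose ((N - 1) / 2) := midchoose_mono (by omega)
      _ ≤ N.choose (N / 2 + 1) := mid_pred_le hN

lemma lt_mid_of_small {N s a : ℕ} (hN : 2 ≤ N) (hs : s < N) (ha : a ≤ s) :
    s.choose a < N.choose (N / 2) := by
  calc s.choose a ≤ s.choose (s / 2) := Nat.choose_le_middle a s
    _ ≤ (N - 1).choose ((N - 1) / 2) := midchoose_mono (by omega)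
    _ < N.choose (N / 2) := by
        have := midchoose_strict (show 1 ≤ N - 1 by omega)
        rw [show N - 1 + 1 = N by omega] at this
        exact this

lemma eq_mid_odd {m a : ℕ} (ha : a ≤ 2 * m + 1)
    (hEq : (2 * m + 1).choose a = (2 * m + 1).choose m) : a = m ∨ a = m + 1 := by
  by_contra hcon
  push_neg at hcon
  rcases Nat.lt_or_ge a m with hlt | hge
  · have := choose_lt_of_lt (m := 2 * m + 1) hlt (by omega)
    omega
  · have hgt : m + 1 < a := by omega
    have h4 := Nat.choose_symm ha
    rw [← h4] at hEq
    have := choose_lt_of_lt (show 2 * m + 1 - a < m by omega) (show 2 * m ≤ 2 * m + 1 by omega)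
    omega

lemma eq_L2_even {m s a : ℕ} (hm : 2 ≤ m) (hs : s ≤ 2 * m) (ha : a ≤ s)
    (hEq : s.choose a = (2 * m).choose (m + 1)) :
    s = 2 * m ∧ (a = m - 1 ∨ a = m + 1) := by
  have hsymm : (2 * m).choose (m - 1) = (2 * m).choose (m + 1) := by
    have h3 := Nat.choose_symm (show m + 1 ≤ 2 * m by omega)
    rw [show 2 * m - (m + 1) = m - 1 by omega] at h3
    exact h3
  have hseq : s = 2 * m := by
    by_contra hne
    have hlt : s < 2 * m := by omega
    have h1 : s.choose a ≤ (2 * m - 1).choose ((2 * m - 1) / 2) :=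
      (Nat.choose_le_middle a s).trans (midchoose_mono (by omega))
    have h2 : (2 * m - 1).choose ((2 * m - 1) / 2) < (2 * m).choose (m + 1) := by
      have hps : (2 * m).choose (m + 1) =
          (2 * m - 1).choose m + (2 * m - 1).choose (m + 1) := by
        rw [show 2 * m = (2 * m - 1) + 1 by omega, Nat.choose_succ_succ]
        simp only [Nat.succ_eq_add_one, show 2 * m - 1 + 1 - 1 = 2 * m - 1 by omega]
      have hsy : (2 * m - 1).choose m = (2 * m - 1).choose ((2 * m - 1) / 2) := by
        have h3 := Nat.choose_symm (show m ≤ 2 * m - 1 by omega)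
        rw [show 2 * m - 1 - m = (2 * m - 1) / 2 by omega] at h3
        exact h3.symm
      have hpos : 0 < (2 * m - 1).choose (m + 1) := Nat.choose_pos (by omega)
      omega
    omega
  subst hseq
  refine ⟨rfl, ?_⟩
  by_contra hcon
  push_neg at hcon
  rcases Nat.lt_or_ge a m with hlt | hge
  · -- a ≤ m - 2
    have h1 : (2 * m).choose a ≤ (2 * m).choose (m - 2) :=
      choose_le_of_le (by omega) (by omega)
    have h2 : (2 * m).choose (m - 2) < (2 * m).choose (m - 1) :=
      choose_lt_of_lt (by omega) (by omega)
    omega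
  · rcases Nat.eq_or_lt_of_le hge with rfl | hgt
    · -- a = m
      have h2 : (2 * m).choose (m - 1) < (2 * m).choose m :=
        choose_lt_of_lt (by omega) (by omega)
      omega
    · -- a ≥ m + 2
      have h4 := Nat.choose_symm ha
      rw [← h4] at hEq
      have h1 : (2 * m).choose (2 * m - a) ≤ (2 * m).choose (m - 2) :=
        choose_le_of_le (by omega) (by omega)
      have h2 : (2 * m).choose (m - 2) < (2 * m).choose (m - 1) :=
        choose_lt_of_lt (by omega) (by omega)
      omega


end SignedExtremal

open SignedExtremal

set_option maxHeartbeats 1600000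

/-- The extremal set-theoretic theorem behind `d(M_Z^n)`: if `X₁, …, X_k` are signed
subsets of `[n+1]` (both parts nonempty) such that there are no indices `a, b, c, d`
with `{a, b} ∩ {c, d} = ∅` and `(X_a⁺ ∪ X_c⁺) ∩ (X_b⁻ ∪ X_d⁻) = ∅`, then
`k ≤ C(n+2, ⌊(n+2)/2⌋)`, with the stated rigidity in the case of equality. -/
theorem signed_sets_extremal (n k : ℕ) (hn : 1 ≤ n)
    (Xp Xm : Fin k → Finset (Fin (n + 1)))
    (hdisj : ∀ i, Disjoint (Xp i) (Xm i))
    (hp : ∀ i, (Xp i).Nonempty) (hm : ∀ i, (Xm i).Nonempty)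
    (h : ¬ ∃ a b c d : Fin k, ({a, b} : Set (Fin k)) ∩ {c, d} = ∅ ∧
      (Xp a ∪ Xp c) ∩ (Xm b ∪ Xm d) = ∅) :
    k ≤ Nat.choose (n + 2) ((n + 2) / 2) ∧
      (k = Nat.choose (n + 2) ((n + 2) / 2) →
        (∀ i, Xp i ∪ Xm i = Finset.univ) ∧
        ((∀ i, (Xp i).card = (n + 1) / 2 ∨ (Xp i).card = (n + 1) / 2 + 1) ∨
         (∀ i, (Xp i).card = (n + 2) / 2 - 1 ∨ (Xp i).card = (n + 2) / 2))) := by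
  classical
  have hrel0 : ∀ i : Fin k, Xp i ∩ Xm i = ∅ := fun i =>
    Finset.disjoint_iff_inter_eq_empty.mp (hdisj i)
  -- no 2-cycles
  have pair2 : ∀ x y : Fin k, x ≠ y → Xp x ∩ Xm y = ∅ → Xp y ∩ Xm x = ∅ → False := by
    intro x y hxy r1 r2
    apply h
    refine ⟨x, x, y, y, ?_, ?_⟩
    · rw [Set.eq_empty_iff_forall_notMem]
      rintro e ⟨he1, he2⟩
      simp only [Set.mem_insert_iff, Set.mem_singleton_iff, or_self] at he1 he2
      subst he1
      exact hxy he2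
    · rw [Finset.eq_empty_iff_forall_notMem]
      intro e he
      rw [Finset.mem_inter, Finset.mem_union, Finset.mem_union] at he
      obtain ⟨h5 | h5, h6 | h6⟩ := he
      · exact Finset.eq_empty_iff_forall_notMem.mp (hrel0 x) e (Finset.mem_inter.mpr ⟨h5, h6⟩)
      · exact Finset.eq_empty_iff_forall_notMem.mp r1 e (Finset.mem_inter.mpr ⟨h5, h6⟩)
      · exact Finset.eq_empty_iff_forall_notMem.mp r2 e (Finset.mem_inter.mpr ⟨h5, h6⟩)
      · exact Finset.eq_empty_iff_forall_notMem.mp (hrel0 y) e (Finset.mem_inter.mpr ⟨h5, h6⟩)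
  -- no transitive triangles
  have trip : ∀ x y z : Fin k, x ≠ y → y ≠ z → x ≠ z →
      Xp x ∩ Xm y = ∅ → Xp y ∩ Xm z = ∅ → Xp x ∩ Xm z = ∅ → False := by
    intro x y z hxy hyz hxz r1 r2 r3
    apply h
    refine ⟨y, y, x, z, ?_, ?_⟩
    · rw [Set.eq_empty_iff_forall_notMem]
      rintro e ⟨he1, he2⟩
      simp only [Set.mem_insert_iff, Set.mem_singleton_iff, or_self] at he1 he2
      subst he1
      rcases he2 with h' | h'
      · exact hxy h'.symm
      · exact hyz h'
    · rw [Finset.eq_empty_iff_forall_notMem]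
      intro e he
      rw [Finset.mem_inter, Finset.mem_union, Finset.mem_union] at he
      obtain ⟨h5 | h5, h6 | h6⟩ := he
      · exact Finset.eq_empty_iff_forall_notMem.mp (hrel0 y) e (Finset.mem_inter.mpr ⟨h5, h6⟩)
      · exact Finset.eq_empty_iff_forall_notMem.mp r2 e (Finset.mem_inter.mpr ⟨h5, h6⟩)
      · exact Finset.eq_empty_iff_forall_notMem.mp r1 e (Finset.mem_inter.mpr ⟨h5, h6⟩)
      · exact Finset.eq_empty_iff_forall_notMem.mp r3 e (Finset.mem_inter.mpr ⟨h5, h6⟩)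
  -- full support
  have hfull : ∀ i : Fin k, (Xp i).card + (Xm i).card = n + 1 → Xm i = (Xp i)ᶜ := by
    intro i hcard
    have huniv : Xp i ∪ Xm i = univ := by
      apply Finset.eq_univ_of_card
      rw [Finset.card_union_of_disjoint (hdisj i), Fintype.card_fin]
      exact hcard
    ext e
    simp only [Finset.mem_compl]
    constructor
    · intro he hc
      exact Finset.eq_empty_iff_forall_notMem.mp (hrel0 i) e (Finset.mem_inter.mpr ⟨hc, he⟩)
    · intro he
      have hmem : e ∈ Xp i ∪ Xm i := huniv ▸ Finset.mem_univ e
      rcases Finset.mem_union.mp hmem with h' | h'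
      · exact absurd h' he
      · exact h'
  have hXpinj : ∀ i j : Fin k, (Xp i).card + (Xm i).card = n + 1 →
      (Xp j).card + (Xm j).card = n + 1 → Xp i = Xp j → i = j := by
    intro i j hi hj hEq
    by_contra hne
    refine pair2 i j hne ?_ ?_
    · rw [hfull j hj, ← hEq]
      exact Finset.inter_compl _
    · rw [hfull i hi, hEq]
      exact Finset.inter_compl _
  -- counting
  set w : Fin k → ℕ := fun i =>
    (univ.filter fun π : Equiv.Perm (Fin (n + 1)) =>
      ∀ x ∈ Xp i, ∀ y ∈ Xm i, π x < π y).card with hwdef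
  have hF1 : ∀ i, (n + 1)! ≤
      w i * (((Xp i).card + (Xm i).card).choose (Xp i).card) := by
    intro i
    have := factorial_le_card_mul (Xp i) (Xm i) (hdisj i)
    rw [Fintype.card_fin] at this
    convert this using 4
  have hchain : ∀ π : Equiv.Perm (Fin (n + 1)),
      (univ.filter fun i : Fin k => ∀ x ∈ Xp i, ∀ y ∈ Xm i, π x < π y).card ≤ 2 := by
    intro π
    by_contra hgt
    push_neg at hgt
    obtain ⟨a, b, c, ha, hb, hc, hab, hac, hbc⟩ := Finset.two_lt_card_iff.mp hgt
    rw [Finset.mem_filter] at ha hb hc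
    have hnea : ∀ i : Fin k, ((Xp i).image π).Nonempty := fun i => (hp i).image π
    set mv : Fin k → Fin (n + 1) := fun i => ((Xp i).image π).max' (hnea i) with hmv
    have key : ∀ i j : Fin k,
        (∀ x ∈ Xp i, ∀ y ∈ Xm i, π x < π y) → (∀ x ∈ Xp j, ∀ y ∈ Xm j, π x < π y) →
        mv i ≤ mv j → Xp i ∩ Xm j = ∅ := by
      intro i j _ hj hle
      rw [Finset.eq_empty_iff_forall_notMem]
      intro e he
      rw [Finset.mem_inter] at he
      have h1 : π e ≤ mv i := Finset.le_max' _ _ (Finset.mem_image_of_mem π he.1)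
      obtain ⟨x0, hx0, hx0e⟩ := Finset.mem_image.mp (Finset.max'_mem ((Xp j).image π) (hnea j))
      have h2 : π x0 < π e := hj x0 hx0 e he.2
      rw [hx0e] at h2
      exact absurd (h1.trans hle) (not_le.mpr h2)
    rcases le_total (mv a) (mv b) with h1 | h1 <;> rcases le_total (mv b) (mv c) with h2 | h2
    · exact trip a b c hab hbc hac (key a b ha.2 hb.2 h1) (key b c hb.2 hc.2 h2)
        (key a c ha.2 hc.2 (h1.trans h2))
    · rcases le_total (mv a) (mv c) with h3 | h3
      · exact trip a c b hac hbc.symm hab (key a c ha.2 hc.2 h3) (key c b hc.2 hb.2 h2)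
          (key a b ha.2 hb.2 h1)
      · exact trip c a b hac.symm hab hbc.symm (key c a hc.2 ha.2 h3) (key a b ha.2 hb.2 h1)
          (key c b hc.2 hb.2 h2)
    · rcases le_total (mv a) (mv c) with h3 | h3
      · exact trip b a c hab.symm hac hbc (key b a hb.2 ha.2 h1) (key a c ha.2 hc.2 h3)
          (key b c hb.2 hc.2 h2)
      · exact trip b c a hbc hac.symm hab.symm (key b c hb.2 hc.2 h2) (key c a hc.2 ha.2 h3)
          (key b a hb.2 ha.2 h1)
    · exact trip c b a hbc.symm hab.symm hac.symm (key c b hc.2 hb.2 h2) (key b a hb.2 ha.2 h1)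
        (key c a hc.2 ha.2 (h2.trans h1))
  have hsum : ∑ i : Fin k, w i ≤ 2 * (n + 1)! := by
    have step1 : ∑ i : Fin k, w i =
        ∑ π : Equiv.Perm (Fin (n + 1)),
          (univ.filter fun i : Fin k => ∀ x ∈ Xp i, ∀ y ∈ Xm i, π x < π y).card := by
      simp only [hwdef, Finset.card_filter]
      exact Finset.sum_comm
    rw [step1]
    calc ∑ π : Equiv.Perm (Fin (n + 1)),
        (univ.filter fun i : Fin k => ∀ x ∈ Xp i, ∀ y ∈ Xm i, π x < π y).card
        ≤ ∑ _π : Equiv.Perm (Fin (n + 1)), 2 := Finset.sum_le_sum fun π _ => hchain π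
      _ = Fintype.card (Equiv.Perm (Fin (n + 1))) * 2 := by
          rw [Finset.sum_const, Finset.card_univ, smul_eq_mul]
      _ = 2 * (n + 1)! := by rw [Fintype.card_perm, Fintype.card_fin]; ring
  have hs_le : ∀ i, (Xp i).card + (Xm i).card ≤ n + 1 := by
    intro i
    rw [← Finset.card_union_of_disjoint (hdisj i)]
    calc (Xp i ∪ Xm i).card ≤ (univ : Finset (Fin (n + 1))).card :=
        Finset.card_le_card (Finset.subset_univ _)
      _ = n + 1 := by rw [Finset.card_univ, Fintype.card_fin]
  set L1 := (n + 1).choose ((n + 1) / 2) with hL1def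
  set L2 := (n + 1).choose ((n + 1) / 2 + 1) with hL2def
  have hL1pos : 0 < L1 := Nat.choose_pos (by omega)
  have hL2pos : 0 < L2 := Nat.choose_pos (by omega)
  have hL2L1 : L2 ≤ L1 := Nat.choose_le_middle _ _
  have hT : (n + 2).choose ((n + 2) / 2) = L1 + L2 := pascal_mid (by omega)
  set Mid : Fin k → Prop := fun i =>
    (Xp i).card + (Xm i).card = n + 1 ∧ (Xp i).card = (n + 1) / 2 with hMiddef
  set F := univ.filter Mid with hFdef
  set G := univ.filter (fun i => ¬ Mid i) with hGdef
  have hfg : F.card + G.card = k := by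
    rw [hFdef, hGdef, Finset.card_filter_add_card_filter_not, Finset.card_univ,
      Fintype.card_fin]
  have hfle : F.card ≤ L1 := by
    have hinj : Set.InjOn (fun i => Xp i) F := by
      intro i hi j hj hEq
      rw [Finset.mem_coe, hFdef, Finset.mem_filter] at hi hj
      exact hXpinj i j hi.2.1 hj.2.1 hEq
    calc F.card = (F.image (fun i => Xp i)).card := (Finset.card_image_of_injOn hinj).symm
      _ ≤ ((univ : Finset (Fin (n + 1))).powersetCard ((n + 1) / 2)).card := by
          apply Finset.card_le_card
          intro T hT'
          obtain ⟨i, hi, rfl⟩ := Finset.mem_image.mp hT'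
          rw [Finset.mem_powersetCard]
          rw [hFdef, Finset.mem_filter] at hi
          exact ⟨Finset.subset_univ _, hi.2.2⟩
      _ = L1 := by rw [Finset.card_powersetCard, Finset.card_univ, Fintype.card_fin]
  have hChle2 : ∀ i, ¬ Mid i →
      (((Xp i).card + (Xm i).card).choose (Xp i).card) ≤ L2 := by
    intro i hi
    exact nonmid_choose_le (by omega) (hs_le i) (by omega) (by rw [hMiddef] at hi; exact hi)
  have hterm : ∀ i : Fin k, (if Mid i then L2 else L1) * (n + 1)! ≤ L1 * L2 * w i := by
    intro i
    by_cases hi : Mid i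
    · rw [if_pos hi]
      have hCh : (((Xp i).card + (Xm i).card).choose (Xp i).card) = L1 := by
        rw [hi.1, hi.2, hL1def]
      calc L2 * (n + 1)! ≤ L2 * (w i * (((Xp i).card + (Xm i).card).choose (Xp i).card)) :=
          Nat.mul_le_mul_left _ (hF1 i)
        _ = L1 * L2 * w i := by rw [hCh]; ring
    · rw [if_neg hi]
      calc L1 * (n + 1)! ≤ L1 * (w i * (((Xp i).card + (Xm i).card).choose (Xp i).card)) :=
          Nat.mul_le_mul_left _ (hF1 i)
        _ ≤ L1 * (w i * L2) :=
          Nat.mul_le_mul_left _ (Nat.mul_le_mul_left _ (hChle2 i hi))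
        _ = L1 * L2 * w i := by ring
  have hkey : F.card * L2 + G.card * L1 ≤ 2 * (L1 * L2) := by
    have hsum2 : ∑ i : Fin k, (if Mid i then L2 else L1) * (n + 1)! ≤
        L1 * L2 * (2 * (n + 1)!) :=
      (Finset.sum_le_sum fun i _ => hterm i).trans (by
        rw [← Finset.mul_sum]
        exact Nat.mul_le_mul_left _ hsum)
    rw [← Finset.sum_mul, Finset.sum_ite, Finset.sum_const, Finset.sum_const,
      smul_eq_mul, smul_eq_mul] at hsum2
    rw [show L1 * L2 * (2 * (n + 1)!) = (2 * (L1 * L2)) * (n + 1)! by ring] at hsum2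
    have h9 := Nat.le_of_mul_le_mul_right hsum2 (Nat.factorial_pos (n + 1))
    simpa [hFdef, hGdef] using h9
  have hbound : k ≤ L1 + L2 := by
    have h1 : k * L1 ≤ (L1 + L2) * L1 := by
      rw [← hfg]
      zify at hkey hfle hL2L1 ⊢
      nlinarith [hkey, hfle, hL2L1]
    exact Nat.le_of_mul_le_mul_right h1 hL1pos
  refine ⟨by rw [hT]; exact hbound, ?_⟩
  intro hkeq
  rw [hT] at hkeq
  have hUnionOf : ∀ i, (Xp i).card + (Xm i).card = n + 1 → Xp i ∪ Xm i = univ := by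
    intro i hi
    apply Finset.eq_univ_of_card
    rw [Finset.card_union_of_disjoint (hdisj i), Fintype.card_fin]
    exact hi
  -- every non-mid has choose value exactly L2
  have hforce : ∀ j, ¬ Mid j →
      (((Xp j).card + (Xm j).card).choose (Xp j).card) = L2 := by
    intro j hj
    rcases Nat.eq_or_lt_of_le (hChle2 j hj) with hEq | hlt
    · exact hEq
    · exfalso
      have hwj : 1 ≤ w j := by
        by_contra hw0
        have h0 : w j = 0 := by omega
        have h1 := hF1 j
        rw [h0, Nat.zero_mul] at h1
        have := Nat.factorial_pos (n + 1)
        omega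
      have hstrict : (if Mid j then L2 else L1) * (n + 1)! < L1 * L2 * w j := by
        rw [if_neg hj]
        have hLwj : 0 < L1 * w j := Nat.mul_pos hL1pos hwj
        calc L1 * (n + 1)! < L1 * (n + 1)! + L1 * w j := by omega
          _ ≤ L1 * (w j * (((Xp j).card + (Xm j).card).choose (Xp j).card)) + L1 * w j := by
              have := Nat.mul_le_mul_left L1 (hF1 j)
              omega
          _ = L1 * (w j * ((((Xp j).card + (Xm j).card).choose (Xp j).card) + 1)) := by ring
          _ ≤ L1 * (w j * L2) :=
              Nat.mul_le_mul_left _ (Nat.mul_le_mul_left _ hlt)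
          _ = L1 * L2 * w j := by ring
      have hsum3 : ∑ i : Fin k, (if Mid i then L2 else L1) * (n + 1)! <
          L1 * L2 * (2 * (n + 1)!) := by
        calc ∑ i : Fin k, (if Mid i then L2 else L1) * (n + 1)!
            < ∑ i : Fin k, L1 * L2 * w i :=
              Finset.sum_lt_sum (fun i _ => hterm i) ⟨j, Finset.mem_univ j, hstrict⟩
          _ = L1 * L2 * ∑ i : Fin k, w i := by rw [Finset.mul_sum]
          _ ≤ L1 * L2 * (2 * (n + 1)!) := Nat.mul_le_mul_left _ hsum
      rw [← Finset.sum_mul, Finset.sum_ite, Finset.sum_const, Finset.sum_const,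
        smul_eq_mul, smul_eq_mul] at hsum3
      rw [show L1 * L2 * (2 * (n + 1)!) = (2 * (L1 * L2)) * (n + 1)! by ring] at hsum3
      have h9 := Nat.lt_of_mul_lt_mul_right hsum3
      have h10 : F.card * L2 + G.card * L1 < 2 * (L1 * L2) := by
        simpa [hFdef, hGdef] using h9
      have hcontra : (F.card : ℤ) * L2 + G.card * L1 < 2 * (L1 * L2) := by exact_mod_cast h10
      have hf' : (F.card : ℤ) ≤ L1 := by exact_mod_cast hfle
      have hl' : (L2 : ℤ) ≤ L1 := by exact_mod_cast hL2L1
      have hk' : (F.card : ℤ) + G.card = L1 + L2 := by exact_mod_cast hfg.trans hkeq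
      nlinarith [mul_nonneg (sub_nonneg.mpr hf') (sub_nonneg.mpr hl')]
  rcases Nat.even_or_odd n with hne | hno
  · -- n even, n + 1 odd
    obtain ⟨r, hr⟩ := hne
    have hL2eqL1 : L2 = L1 := by
      rw [hL1def, hL2def]
      have h3 := Nat.choose_symm (show (n + 1) / 2 + 1 ≤ n + 1 by omega)
      rw [show n + 1 - ((n + 1) / 2 + 1) = (n + 1) / 2 by omega] at h3
      exact h3.symm
    have hCh_eq : ∀ i, (((Xp i).card + (Xm i).card).choose (Xp i).card) = L1 := by
      intro i
      by_cases hi : Mid i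
      · rw [hi.1, hi.2, hL1def]
      · rw [hforce i hi, hL2eqL1]
    have hs_eq : ∀ i, (Xp i).card + (Xm i).card = n + 1 := by
      intro i
      by_contra hne2
      have hlt : (Xp i).card + (Xm i).card < n + 1 := lt_of_le_of_ne (hs_le i) hne2
      have h1 := lt_mid_of_small (show 2 ≤ n + 1 by omega) hlt (Nat.le_add_right (Xp i).card (Xm i).card)
      have h2 := hCh_eq i
      rw [hL1def] at h2
      omega
    refine ⟨fun i => hUnionOf i (hs_eq i), Or.inl ?_⟩
    intro i
    have h2 := hCh_eq i
    rw [hs_eq i, hL1def] at h2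
    have h4 := eq_mid_odd (m := r) (show (Xp i).card ≤ 2 * r + 1 by
        have := hs_eq i; omega)
      (by rw [show 2 * r + 1 = n + 1 by omega, show r = (n + 1) / 2 by omega]; exact h2)
    omega
  · -- n odd, n + 1 even
    obtain ⟨r, hr⟩ := hno
    have hNm : n + 1 = 2 * (r + 1) := by omega
    set m' := r + 1 with hm'def
    rcases Nat.lt_or_ge n 2 with hn1 | hn3
    · -- n = 1 : impossible
      exfalso
      have hGzero : G.card = 0 := by
        rw [Finset.card_eq_zero, hGdef, Finset.filter_eq_empty_iff]
        intro i _
        rw [not_not]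
        have ha1 : 1 ≤ (Xp i).card := Finset.card_pos.mpr (hp i)
        have hc1 : 1 ≤ (Xm i).card := Finset.card_pos.mpr (hm i)
        have h5 := hs_le i
        rw [hMiddef]
        exact ⟨by omega, by omega⟩
      omega
    · have hm2 : 2 ≤ m' := by omega
      have hsymmL2 : (n + 1).choose (m' - 1) = L2 := by
        rw [hL2def, show (n + 1) / 2 + 1 = m' + 1 by omega]
        have h3 := Nat.choose_symm (show m' + 1 ≤ n + 1 by omega)
        rw [show n + 1 - (m' + 1) = m' - 1 by omega] at h3
        exact h3
      have hL2lt : L2 < L1 := by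
        rw [← hsymmL2, hL1def, show (n + 1) / 2 = m' by omega]
        exact choose_lt_of_lt (by omega) (by omega)
      have hfL1 : F.card = L1 := by
        have h10 : (F.card : ℤ) * L2 + G.card * L1 ≤ 2 * (L1 * L2) := by exact_mod_cast hkey
        have hf' : (F.card : ℤ) ≤ L1 := by exact_mod_cast hfle
        have hk' : (F.card : ℤ) + G.card = L1 + L2 := by exact_mod_cast hfg.trans hkeq
        have hl2' : (L2 : ℤ) < L1 := by exact_mod_cast hL2lt
        have hge : (L1 : ℤ) ≤ F.card := by nlinarith
        exact_mod_cast le_antisymm hf' hge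
      have hGL2 : G.card = L2 := by omega
      have hnm : ∀ j, ¬ Mid j → ((Xp j).card + (Xm j).card = n + 1 ∧
          ((Xp j).card = m' - 1 ∨ (Xp j).card = m' + 1)) := by
        intro j hj
        have h2 := hforce j hj
        have h4 := eq_L2_even (m := m') hm2 (by have := hs_le j; omega) (Nat.le_add_right (Xp j).card (Xm j).card)
          (by rw [h2, hL2def, show (n + 1) / 2 + 1 = m' + 1 by omega,
                show n + 1 = 2 * m' by omega])
        exact ⟨by omega, h4.2⟩
      have hs_eq : ∀ i, (Xp i).card + (Xm i).card = n + 1 := by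
        intro i
        by_cases hi : Mid i
        · exact hi.1
        · exact (hnm i hi).1
      refine ⟨fun i => hUnionOf i (hs_eq i), ?_⟩
      have hinjXp : ∀ i j : Fin k, Xp i = Xp j → i = j := fun i j hEq =>
        hXpinj i j (hs_eq i) (hs_eq j) hEq
      have himg : F.image (fun i => Xp i) =
          (univ : Finset (Fin (n + 1))).powersetCard ((n + 1) / 2) := by
        apply Finset.eq_of_subset_of_card_le
        · intro T hT'
          obtain ⟨i, hi, rfl⟩ := Finset.mem_image.mp hT'
          rw [Finset.mem_powersetCard]
          rw [hFdef, Finset.mem_filter] at hi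
          exact ⟨Finset.subset_univ _, hi.2.2⟩
        · rw [Finset.card_powersetCard, Finset.card_univ, Fintype.card_fin,
            Finset.card_image_of_injOn (fun i _ j _ hEq => hinjXp i j hEq), hfL1, hL1def]
      set AD := univ.filter (fun i : Fin k => (Xp i).card = m' - 1) with hADdef
      set AU := univ.filter (fun i : Fin k => (Xp i).card = m' + 1) with hAUdef
      have hADU : AD.card + AU.card = L2 := by
        have hdisjDU : Disjoint AD AU := by
          rw [Finset.disjoint_left]
          intro i hi1 hi2
          rw [hADdef, Finset.mem_filter] at hi1
          rw [hAUdef, Finset.mem_filter] at hi2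
          omega
        have hunionDU : AD ∪ AU = G := by
          ext i
          rw [Finset.mem_union, hADdef, hAUdef, hGdef, Finset.mem_filter, Finset.mem_filter,
            Finset.mem_filter]
          constructor
          · rintro (⟨_, h5⟩ | ⟨_, h5⟩) <;>
              exact ⟨Finset.mem_univ i, fun hMidi => by
                rw [hMiddef] at hMidi
                have := hMidi.2
                omega⟩
          · rintro ⟨_, hnmid⟩
            rcases (hnm i hnmid).2 with h5 | h5
            · exact Or.inl ⟨Finset.mem_univ i, h5⟩
            · exact Or.inr ⟨Finset.mem_univ i, h5⟩
        rw [← Finset.card_union_of_disjoint hdisjDU, hunionDU, hGL2]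
      by_cases hADne : AD.card = 0
      · -- no sets at level m'-1 : left conclusion
        left
        intro i
        by_cases hi : Mid i
        · left
          exact hi.2
        · rcases (hnm i hi).2 with h5 | h5
          · exfalso
            have : i ∈ AD := by
              rw [hADdef, Finset.mem_filter]
              exact ⟨Finset.mem_univ i, h5⟩
            rw [Finset.card_eq_zero] at hADne
            rw [hADne] at this
            exact absurd this (Finset.notMem_empty i)
          · right
            omega
      by_cases hAUne : AU.card = 0
      · -- no sets at level m'+1 : right conclusion
        right
        intro i
        by_cases hi : Mid i
        · right
          have := hi.2
          omega
        · rcases (hnm i hi).2 with h5 | h5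
          · left
            omega
          · exfalso
            have : i ∈ AU := by
              rw [hAUdef, Finset.mem_filter]
              exact ⟨Finset.mem_univ i, h5⟩
            rw [Finset.card_eq_zero] at hAUne
            rw [hAUne] at this
            exact absurd this (Finset.notMem_empty i)
      -- both levels inhabited : contradiction
      exfalso
      have hADpos : 0 < AD.card := Nat.pos_of_ne_zero hADne
      have hAUpos : 0 < AU.card := Nat.pos_of_ne_zero hAUne
      set 𝒜 := AD.image (fun i => Xp i) with h𝒜def
      set ℬ := AU.image (fun i => Xp i) with hℬdef
      have hcard𝒜 : 𝒜.card = AD.card :=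
        Finset.card_image_of_injOn (fun i _ j _ hEq => hinjXp i j hEq)
      have hcardℬ : ℬ.card = AU.card :=
        Finset.card_image_of_injOn (fun i _ j _ hEq => hinjXp i j hEq)
      have h𝒜card : ∀ T ∈ 𝒜, T.card = m' - 1 := by
        intro T hT'
        obtain ⟨i, hi, rfl⟩ := Finset.mem_image.mp hT'
        rw [hADdef, Finset.mem_filter] at hi
        exact hi.2
      have hℬcard : ∀ S ∈ ℬ, S.card = m' + 1 := by
        intro S hS'
        obtain ⟨i, hi, rfl⟩ := Finset.mem_image.mp hS'
        rw [hAUdef, Finset.mem_filter] at hi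
        exact hi.2
      have hsubrel : ∀ i j : Fin k, Xp i ⊆ Xp j → Xp i ∩ Xm j = ∅ := by
        intro i j hsub
        rw [hfull j (hs_eq j), Finset.eq_empty_iff_forall_notMem]
        intro e he
        rw [Finset.mem_inter, Finset.mem_compl] at he
        exact he.2 (hsub he.1)
      have hmidof : ∀ M : Finset (Fin (n + 1)), M.card = m' →
          ∃ i0 : Fin k, Xp i0 = M := by
        intro M hM
        have hMmem : M ∈ F.image (fun i => Xp i) := by
          rw [himg, Finset.mem_powersetCard]
          exact ⟨Finset.subset_univ _, by omega⟩
        obtain ⟨i0, _, hEq⟩ := Finset.mem_image.mp hMmem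
        exact ⟨i0, hEq⟩
      have hcrossfree : ∀ T ∈ 𝒜, ∀ S ∈ ℬ, ¬ T ⊆ S := by
        rintro T hT' S hS' hsub
        obtain ⟨t, ht, rfl⟩ := Finset.mem_image.mp hT'
        obtain ⟨u, hu, rfl⟩ := Finset.mem_image.mp hS'
        rw [hADdef, Finset.mem_filter] at ht
        rw [hAUdef, Finset.mem_filter] at hu
        have hx : (Xp u \ Xp t).Nonempty := by
          rw [Finset.sdiff_nonempty]
          intro hsub2
          have := Finset.card_le_card hsub2
          omega
        obtain ⟨x, hxmem⟩ := hx
        rw [Finset.mem_sdiff] at hxmem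
        have hMcard : (insert x (Xp t)).card = m' := by
          rw [Finset.card_insert_of_notMem hxmem.2, ht.2]
          omega
        obtain ⟨i0, hi0eq⟩ := hmidof (insert x (Xp t)) hMcard
        have hi0card : (Xp i0).card = m' := by rw [hi0eq]; exact hMcard
        have htne : t ≠ i0 := by
          intro hEq
          rw [hEq] at ht
          omega
        have hi0u : i0 ≠ u := by
          intro hEq
          rw [hEq] at hi0card
          omega
        have htu : t ≠ u := by
          intro hEq
          rw [hEq] at ht
          omega
        refine trip t i0 u htne hi0u htu ?_ ?_ ?_
        · apply hsubrel
          rw [hi0eq]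
          exact Finset.subset_insert x (Xp t)
        · apply hsubrel
          rw [hi0eq]
          exact Finset.insert_subset hxmem.1 hsub
        · exact hsubrel t u hsub
      set lev := (univ : Finset (Fin (n + 1))).powersetCard (m' - 1) with hlevdef
      set D := lev \ 𝒜 with hDdef
      have hlevcard : lev.card = L2 := by
        rw [hlevdef, Finset.card_powersetCard, Finset.card_univ, Fintype.card_fin, hsymmL2]
      have h𝒜sub : 𝒜 ⊆ lev := by
        intro T hT'
        rw [hlevdef, Finset.mem_powersetCard]
        exact ⟨Finset.subset_univ _, h𝒜card T hT'⟩
      have hDcard : D.card = L2 - AD.card := by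
        rw [hDdef, Finset.card_sdiff_of_subset h𝒜sub, hlevcard, hcard𝒜]
      have hDB : D.card = ℬ.card := by
        rw [hDcard, hcardℬ]
        omega
      set c0 := (m' + 1).choose 2 with hc0def
      have hclaim1 : ∀ S ∈ ℬ, (D.filter (fun T => T ⊆ S)).card = c0 := by
        intro S hS'
        have hScard : S.card = m' + 1 := hℬcard S hS'
        have hfeq : D.filter (fun T => T ⊆ S) = S.powersetCard (m' - 1) := by
          ext T
          rw [Finset.mem_filter, hDdef, Finset.mem_sdiff, hlevdef, Finset.mem_powersetCard,
            Finset.mem_powersetCard]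
          constructor
          · rintro ⟨⟨⟨_, hTcard⟩, _⟩, hTS⟩
            exact ⟨hTS, hTcard⟩
          · rintro ⟨hTS, hTcard⟩
            exact ⟨⟨⟨Finset.subset_univ _, hTcard⟩,
              fun hT𝒜 => hcrossfree T hT𝒜 S hS' hTS⟩, hTS⟩
        rw [hfeq, Finset.card_powersetCard, hScard, hc0def]
        have h3 := Nat.choose_symm (show 2 ≤ m' + 1 by omega)
        rw [show m' + 1 - 2 = m' - 1 by omega] at h3
        exact h3
      have hsupcard : ∀ T ∈ D, (((univ : Finset (Fin (n + 1))).powersetCard (m' + 1)).filter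
          (fun S => T ⊆ S)).card = c0 := by
        intro T hT'
        have hTcard : T.card = m' - 1 := by
          rw [hDdef, Finset.mem_sdiff, hlevdef, Finset.mem_powersetCard] at hT'
          exact hT'.1.2
        rw [card_supersets T (m' + 1) (by omega), Fintype.card_fin, hTcard,
          show (n + 1) - (m' - 1) = m' + 1 by omega,
          show m' + 1 - (m' - 1) = 2 by omega, hc0def]
      have hℬsub : ℬ ⊆ (univ : Finset (Fin (n + 1))).powersetCard (m' + 1) := by
        intro S hS'
        rw [Finset.mem_powersetCard]
        exact ⟨Finset.subset_univ _, hℬcard S hS'⟩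
      have hclaim2 : ∀ T ∈ D, (ℬ.filter (fun S => T ⊆ S)).card ≤ c0 := by
        intro T hT'
        rw [← hsupcard T hT']
        exact Finset.card_le_card (Finset.filter_subset_filter _ hℬsub)
      have hdouble : ∑ S ∈ ℬ, (D.filter (fun T => T ⊆ S)).card =
          ∑ T ∈ D, (ℬ.filter (fun S => T ⊆ S)).card := by
        simp only [Finset.card_filter]
        exact Finset.sum_comm
      have hLHS : ∑ S ∈ ℬ, (D.filter (fun T => T ⊆ S)).card = ℬ.card * c0 := by
        rw [Finset.sum_congr rfl (fun S hS' => hclaim1 S hS'), Finset.sum_const, smul_eq_mul]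
      have hdeg : ∀ T ∈ D, (ℬ.filter (fun S => T ⊆ S)).card = c0 := by
        by_contra hcon
        push_neg at hcon
        obtain ⟨T0, hT0, hT0ne⟩ := hcon
        have hstrict2 : ∑ T ∈ D, (ℬ.filter (fun S => T ⊆ S)).card < D.card * c0 := by
          calc ∑ T ∈ D, (ℬ.filter (fun S => T ⊆ S)).card
              < ∑ _T ∈ D, c0 := Finset.sum_lt_sum (fun T hT' => hclaim2 T hT')
                ⟨T0, hT0, lt_of_le_of_ne (hclaim2 T0 hT0) hT0ne⟩
            _ = D.card * c0 := by rw [Finset.sum_const, smul_eq_mul]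
        rw [← hdouble, hLHS, ← hDB] at hstrict2
        omega
      have hfullsup : ∀ T ∈ D, ∀ S : Finset (Fin (n + 1)), S.card = m' + 1 → T ⊆ S → S ∈ ℬ := by
        intro T hT' S hScard hTS
        have hEqsets : ℬ.filter (fun S => T ⊆ S) =
            ((univ : Finset (Fin (n + 1))).powersetCard (m' + 1)).filter (fun S => T ⊆ S) :=
          Finset.eq_of_subset_of_card_le (Finset.filter_subset_filter _ hℬsub)
            (by rw [hsupcard T hT', hdeg T hT'])
        have hmem : S ∈ ((univ : Finset (Fin (n + 1))).powersetCard (m' + 1)).filter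
            (fun S => T ⊆ S) := by
          rw [Finset.mem_filter, Finset.mem_powersetCard]
          exact ⟨⟨Finset.subset_univ _, hScard⟩, hTS⟩
        rw [← hEqsets, Finset.mem_filter] at hmem
        exact hmem.1
      have h𝒜ne : 𝒜.Nonempty := by
        rw [← Finset.card_pos, hcard𝒜]
        exact hADpos
      have hDnemp : D.Nonempty := by
        rw [← Finset.card_pos, hDB, hcardℬ]
        exact hAUpos
      have hDlev : ∀ T ∈ D, T.card = m' - 1 := by
        intro T hT'
        rw [hDdef, Finset.mem_sdiff, hlevdef, Finset.mem_powersetCard] at hT'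
        exact hT'.1.2
      have hcover : ∀ T : Finset (Fin (n + 1)), T.card = m' - 1 → T ∈ 𝒜 ∨ T ∈ D := by
        intro T hTcard
        by_cases hT𝒜 : T ∈ 𝒜
        · exact Or.inl hT𝒜
        · refine Or.inr ?_
          rw [hDdef, Finset.mem_sdiff, hlevdef, Finset.mem_powersetCard]
          exact ⟨⟨Finset.subset_univ _, hTcard⟩, hT𝒜⟩
      have hdisj𝒜D : Disjoint 𝒜 D := by
        rw [hDdef]
        exact Finset.disjoint_sdiff
      obtain ⟨T0, hT0, T1, hT1, hUnionSmall⟩ :=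
        exists_adjacent_pair 𝒜 D h𝒜card hDlev hdisj𝒜D hcover h𝒜ne hDnemp
      obtain ⟨S, hS1, _, hScard⟩ := Finset.exists_subsuperset_card_eq
        (Finset.subset_univ (T0 ∪ T1)) (show (T0 ∪ T1).card ≤ m' + 1 by omega)
        (by rw [Finset.card_univ, Fintype.card_fin]; omega)
      have hSℬ : S ∈ ℬ := hfullsup T1 hT1 S hScard
        ((Finset.subset_union_right).trans hS1)
      exact hcrossfree T0 hT0 S hSℬ ((Finset.subset_union_left).trans hS1)
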